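/- Let P be a graded poset with rank function ρ and θ an equivalence relation on P such that ρ(p) = ρ(q) whenever p θ q. Then θ is a compatible congruence. -/
import Mathlib


/-- `r` is compatible: every `r`-circle lies in a single equivalence class. -/
def IsCompatible {P : Type*} [PartialOrder P] (r : P → P → Prop) : Prop :=
  ∀ (n : ℕ) (p : Fin (n + 1) → P),
    (∀ i : Fin n, r (p i.castSucc) (p i.succ) ∨ p i.castSucc < p i.succ) →
    p 0 = p (Fin.last n) →
    ∀ i j, r (p i) (p j)

theorem rank_constant_implies_compatible
    {P : Type*} [PartialOrder P] (θ : Setoid P) (ρ : P → ℤ)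
    (hstrict : ∀ p q : P, p < q → ρ p < ρ q)
    (hcov : ∀ p q : P, p ⋖ q → ρ q = ρ p + 1)
    (hconst : ∀ p q : P, θ.r p q → ρ p = ρ q) :
    IsCompatible θ.r := by
  intro n p hstep h0
  -- rank is monotone along the circle
  have stepmk : ∀ m (hm : m < n),
      θ.r (p ⟨m, by omega⟩) (p ⟨m + 1, by omega⟩) ∨
        p ⟨m, by omega⟩ < p ⟨m + 1, by omega⟩ := by
    intro m hm
    have h := hstep ⟨m, hm⟩
    have h1 : (⟨m, hm⟩ : Fin n).castSucc = ⟨m, by omega⟩ := rfl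
    have h2 : (⟨m, hm⟩ : Fin n).succ = ⟨m + 1, by omega⟩ := rfl
    rwa [h1, h2] at h
  have mono : ∀ b (hb : b ≤ n) a (ha : a ≤ b),
      ρ (p ⟨a, by omega⟩) ≤ ρ (p ⟨b, by omega⟩) := by
    intro b
    induction b with
    | zero => intro hb a ha; interval_cases a; exact le_refl _
    | succ m ih =>
      intro hb a ha
      have step : ρ (p ⟨m, by omega⟩) ≤ ρ (p ⟨m + 1, by omega⟩) := by
        rcases stepmk m (by omega) with h | h
        · exact le_of_eq (hconst _ _ h)
        · exact le_of_lt (hstrict _ _ h)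
      rcases Nat.lt_or_ge a (m + 1) with h | h
      · exact le_trans (ih (by omega) a (by omega)) step
      · have : a = m + 1 := by omega
        subst this; exact le_refl _
  -- rank is constant
  have h0' : p ⟨0, by omega⟩ = p ⟨n, by omega⟩ := h0
  have const : ∀ a (ha : a ≤ n), ρ (p ⟨a, by omega⟩) = ρ (p ⟨0, by omega⟩) := by
    intro a ha
    have h1 := mono a ha 0 (by omega)
    have h2 := mono n le_rfl a ha
    exact le_antisymm (le_of_le_of_eq h2 (congrArg ρ h0'.symm)) h1
  -- every step is θ
  have stepθ : ∀ m (hm : m < n), θ.r (p ⟨m, by omega⟩) (p ⟨m + 1, by omega⟩) := by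
    intro m hm
    rcases stepmk m hm with h | h
    · exact h
    · exfalso
      have := hstrict _ _ h
      have e1 := const m (by omega)
      have e2 := const (m + 1) (by omega)
      omega
  -- chain
  have chain : ∀ a (ha : a ≤ n), θ.r (p ⟨0, by omega⟩) (p ⟨a, by omega⟩) := by
    intro a
    induction a with
    | zero => intro _; exact θ.refl _
    | succ m ih =>
      intro ha
      exact θ.trans (ih (by omega)) (stepθ m (by omega))
  intro i j
  have hi : θ.r (p ⟨0, by omega⟩) (p i) := by
    have := chain i.val (by omega)
    rwa [Fin.eta] at this
  have hj : θ.r (p ⟨0, by omega⟩) (p j) := by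
    have := chain j.val (by omega)
    rwa [Fin.eta] at this
  exact θ.trans (θ.symm hi) hj
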